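/- For all positive integers dA and d with d ≤ dA², there exists a family 𝒫 of real polynomials in the 2·d·dA² real coordinates (real and imaginary parts) of a d-tuple (v_1, …, v_d) of vectors in ℂ^{dA} ⊗ ℂ^{dA} such that: a tuple of linearly independent vectors is a common zero of all polynomials in 𝒫 if and only if the subspace S = span{v_1, …, v_d} satisfies the orthogonality constraint S ⊥ ((I+X) ⊗ (I−X))·S^⊥, i.e. ⟨φ, ((I+X) ⊗ (I−X)) ψ⟩ = 0 for all φ ∈ S and ψ ∈ S^⊥. In other words, the set of linearly independent d-tuples spanning a subspace satisfying this constraint is the intersection of a real Zariski-closed (algebraic) set with the set of linearly independent tuples. -/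

import Mathlib

open Matrix

noncomputable section

/-- Orthogonal complement (as a set) of a set of vectors, with respect to the
standard Hermitian inner product `⟨φ, ψ⟩ = (star φ) ⬝ᵥ ψ`. -/
def hermOrthSet {α : Type*} [Fintype α] (S : Set (α → ℂ)) : Set (α → ℂ) :=
  {ψ | ∀ φ ∈ S, star φ ⬝ᵥ ψ = 0}

/-- The real coordinates of a `d`-tuple of vectors in `ℂ^{dA} ⊗ ℂ^{dA}`: the real
part (`true`) and imaginary part (`false`) of each complex entry. -/
def realCoords {d dA : ℕ} (v : Fin d → (Fin dA × Fin dA) → ℂ) :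
    Fin d × (Fin dA × Fin dA) × Bool → ℝ :=
  fun x => if x.2.2 then (v x.1 x.2.1).re else (v x.1 x.2.1).im

/-- The `n×n` matrix with ones on the anti-diagonal and zeros elsewhere. -/
def Xmat (n : ℕ) : Matrix (Fin n) (Fin n) ℂ :=
  Matrix.of fun i j => if (i : ℕ) + (j : ℕ) = n - 1 then 1 else 0

/-- The orthogonality constraint `S ⊥ ((I+X) ⊗ (I−X))·S^⊥`:
`⟨φ, ((I+X)⊗(I−X)) ψ⟩ = 0` for all `φ ∈ S` and `ψ ∈ S^⊥`. -/
def OrthConstraint {dA : ℕ} (S : Submodule ℂ ((Fin dA × Fin dA) → ℂ)) : Prop :=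
  ∀ φ ∈ S, ∀ ψ ∈ hermOrthSet (S : Set ((Fin dA × Fin dA) → ℂ)),
    star φ ⬝ᵥ ((Matrix.kroneckerMap (· * ·) (1 + Xmat dA) (1 - Xmat dA)) *ᵥ ψ) = 0

namespace OrthAux

open MvPolynomial
open scoped ComplexOrder

variable {σ : Type*}

/-- Real-part polynomial of a complex polynomial (valid at real points). -/
def reP (q : MvPolynomial σ ℂ) : MvPolynomial σ ℝ :=
  (AddMonoidAlgebra.coeff q).sum fun m a => monomial m a.re

/-- Imaginary-part polynomial of a complex polynomial (valid at real points). -/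
def imP (q : MvPolynomial σ ℂ) : MvPolynomial σ ℝ :=
  (AddMonoidAlgebra.coeff q).sum fun m a => monomial m a.im

lemma eval_reP (c : σ → ℝ) (q : MvPolynomial σ ℂ) :
    eval c (reP q) = (eval (fun x => (c x : ℂ)) q).re := by
  classical
  conv_rhs => rw [q.as_sum]
  rw [reP, Finsupp.sum, map_sum, map_sum, Complex.re_sum]
  refine Finset.sum_congr rfl fun m _ => ?_
  rw [eval_monomial, eval_monomial]
  have h : (m.prod fun n e => ((c n : ℂ)) ^ e) = ((m.prod fun n e => (c n) ^ e : ℝ) : ℂ) := by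
    rw [Finsupp.prod, Finsupp.prod]
    push_cast
    rfl
  rw [h, Complex.mul_re, Complex.ofReal_re, Complex.ofReal_im, mul_zero, sub_zero]
  rfl

lemma eval_imP (c : σ → ℝ) (q : MvPolynomial σ ℂ) :
    eval c (imP q) = (eval (fun x => (c x : ℂ)) q).im := by
  classical
  conv_rhs => rw [q.as_sum]
  rw [imP, Finsupp.sum, map_sum, map_sum, Complex.im_sum]
  refine Finset.sum_congr rfl fun m _ => ?_
  rw [eval_monomial, eval_monomial]
  have h : (m.prod fun n e => ((c n : ℂ)) ^ e) = ((m.prod fun n e => (c n) ^ e : ℝ) : ℂ) := by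
    rw [Finsupp.prod, Finsupp.prod]
    push_cast
    rfl
  rw [h, Complex.mul_im, Complex.ofReal_re, Complex.ofReal_im, mul_zero, zero_add]
  rfl

/-- The Gram determinant vanishes iff the family is linearly dependent. -/
lemma gram_det_eq_zero_iff {m ι : Type*} [Fintype m] [Fintype ι] [DecidableEq m]
    (w : m → ι → ℂ) :
    (Matrix.of fun i j => star (w i) ⬝ᵥ w j : Matrix m m ℂ).det = 0 ↔
      ¬ LinearIndependent ℂ w := by
  classical
  set A : Matrix ι m ℂ := Matrix.of fun k j => w j k with hA
  have hG : (Matrix.of fun i j => star (w i) ⬝ᵥ w j : Matrix m m ℂ) = Aᴴ * A := by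
    ext i j
    simp [Matrix.mul_apply, Matrix.conjTranspose_apply, hA, dotProduct]
  rw [hG, ← Matrix.exists_mulVec_eq_zero_iff, Fintype.not_linearIndependent_iff]
  constructor
  · rintro ⟨x, hx0, hx⟩
    rw [conjTranspose_mul_self_mulVec_eq_zero] at hx
    refine ⟨x, ?_, ?_⟩
    · funext k
      have := congrFun hx k
      simpa [Matrix.mulVec, dotProduct, hA, mul_comm, Finset.sum_apply] using this
    · exact Function.ne_iff.mp hx0
  · rintro ⟨g, hg, i, hi⟩
    refine ⟨g, fun h => hi (congrFun h i), ?_⟩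
    rw [conjTranspose_mul_self_mulVec_eq_zero]
    funext k
    have := congrFun hg k
    simpa [Matrix.mulVec, dotProduct, hA, mul_comm, Finset.sum_apply] using this

/-- The matrix `(I+X) ⊗ (I−X)`. -/
def Mk (dA : ℕ) : Matrix (Fin dA × Fin dA) (Fin dA × Fin dA) ℂ :=
  Matrix.kroneckerMap (· * ·) (1 + Xmat dA) (1 - Xmat dA)

lemma Xmat_herm (n : ℕ) : (Xmat n)ᴴ = Xmat n := by
  ext i j
  simp only [conjTranspose_apply, Xmat, of_apply]
  rw [Nat.add_comm]
  split_ifs <;> simp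

lemma Mk_herm (dA : ℕ) : (Mk dA)ᴴ = Mk dA := by
  have h1 : (1 + Xmat dA)ᴴ = 1 + Xmat dA := by
    rw [conjTranspose_add, conjTranspose_one, Xmat_herm]
  have h2 : (1 - Xmat dA)ᴴ = 1 - Xmat dA := by
    rw [conjTranspose_sub, conjTranspose_one, Xmat_herm]
  ext ⟨a, b⟩ ⟨c, d⟩
  simp only [Mk, conjTranspose_apply, kroneckerMap_apply, star_mul']
  rw [← conjTranspose_apply, ← conjTranspose_apply, h1, h2]

lemma adjoint_key {dA : ℕ} (φ ψ : (Fin dA × Fin dA) → ℂ) :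
    star φ ⬝ᵥ (Mk dA *ᵥ ψ) = star (Mk dA *ᵥ φ) ⬝ᵥ ψ := by
  rw [Matrix.star_mulVec, Mk_herm, Matrix.dotProduct_mulVec]

lemma orthConstraint_iff {dA d : ℕ} (v : Fin d → (Fin dA × Fin dA) → ℂ) :
    OrthConstraint (Submodule.span ℂ (Set.range v)) ↔
      ∀ i, Mk dA *ᵥ v i ∈ Submodule.span ℂ (Set.range v) := by
  set S := Submodule.span ℂ (Set.range v) with hSdef
  set e : ((Fin dA × Fin dA) → ℂ) ≃ₗ[ℂ] EuclideanSpace ℂ (Fin dA × Fin dA) :=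
    (WithLp.linearEquiv 2 ℂ _).symm with he
  set S' : Submodule ℂ (EuclideanSpace ℂ (Fin dA × Fin dA)) := S.map (e : ((Fin dA × Fin dA) → ℂ) →ₗ[ℂ] EuclideanSpace ℂ (Fin dA × Fin dA)) with hS'
  have hmem : ∀ x, e x ∈ S' ↔ x ∈ S := by
    intro x
    constructor
    · rintro h
      obtain ⟨y, hy, hxy⟩ := Submodule.mem_map.mp h
      rwa [← e.injective hxy]
    · intro hx
      exact Submodule.mem_map.mpr ⟨x, hx, rfl⟩
  have hinner : ∀ (a b : (Fin dA × Fin dA) → ℂ),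
      (inner ℂ (e a) (e b) : ℂ) = star a ⬝ᵥ b := fun a b => by
        simp [he, PiLp.inner_apply, dotProduct, mul_comm]
  have hherm : ∀ ψ, ψ ∈ hermOrthSet (S : Set ((Fin dA × Fin dA) → ℂ)) ↔ e ψ ∈ S'ᗮ := by
    intro ψ
    rw [Submodule.mem_orthogonal]
    constructor
    · intro hψ φ' hφ'
      obtain ⟨φ, hφ, rfl⟩ := Submodule.mem_map.mp hφ'
      exact (hinner φ ψ).trans (hψ φ hφ)
    · intro hψ φ hφ
      rw [← hinner]
      exact hψ (e φ) ((hmem φ).mpr hφ)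
  have hdouble : ∀ u, (∀ ψ ∈ hermOrthSet (S : Set ((Fin dA × Fin dA) → ℂ)),
      star u ⬝ᵥ ψ = 0) → u ∈ S := by
    intro u hu
    have h1 : e u ∈ S'ᗮᗮ := by
      rw [Submodule.mem_orthogonal']
      intro ψ' hψ'
      have h2 : e (e.symm ψ') ∈ S'ᗮ := by simpa using hψ'
      have h3 := hu (e.symm ψ') ((hherm _).mpr h2)
      have h4 := hinner u (e.symm ψ')
      rw [e.apply_symm_apply] at h4
      rw [h4]
      exact h3
    rw [Submodule.orthogonal_orthogonal] at h1
    exact (hmem u).mp h1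
  constructor
  · intro h i
    apply hdouble
    intro ψ hψ
    have := h (v i) (Submodule.subset_span (Set.mem_range_self i)) ψ hψ
    rwa [show (Matrix.kroneckerMap (· * ·) (1 + Xmat dA) (1 - Xmat dA)) = Mk dA from rfl,
      adjoint_key] at this
  · intro h φ hφ ψ hψ
    rw [show (Matrix.kroneckerMap (· * ·) (1 + Xmat dA) (1 - Xmat dA)) = Mk dA from rfl,
      adjoint_key]
    have hS : S ≤ S.comap (Matrix.mulVecLin (Mk dA)) := by
      rw [hSdef]
      apply Submodule.span_le.mpr
      rintro _ ⟨i, rfl⟩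
      simpa [Matrix.mulVecLin_apply] using h i
    have : Mk dA *ᵥ φ ∈ S := by simpa [Matrix.mulVecLin_apply] using hS hφ
    exact hψ _ this

/-- Polynomial variable for the complex entry `v j k`. -/
def VP (d dA : ℕ) (j : Fin d) (k : Fin dA × Fin dA) :
    MvPolynomial (Fin d × (Fin dA × Fin dA) × Bool) ℂ :=
  X (j, k, true) + C Complex.I * X (j, k, false)

/-- Polynomial for the conjugate of the complex entry `v j k`. -/
def VPc (d dA : ℕ) (j : Fin d) (k : Fin dA × Fin dA) :
    MvPolynomial (Fin d × (Fin dA × Fin dA) × Bool) ℂ :=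
  X (j, k, true) - C Complex.I * X (j, k, false)

/-- Polynomials for the tuple `(v_1, …, v_d, M v_{i0})`. -/
def WP (d dA : ℕ) (i0 : Fin d) :
    Fin (d + 1) → (Fin dA × Fin dA) → MvPolynomial (Fin d × (Fin dA × Fin dA) × Bool) ℂ :=
  Fin.snoc (VP d dA) (fun k => ∑ l, C (Mk dA k l) * VP d dA i0 l)

/-- Polynomials for the conjugates of the tuple `(v_1, …, v_d, M v_{i0})`. -/
def WPc (d dA : ℕ) (i0 : Fin d) :
    Fin (d + 1) → (Fin dA × Fin dA) → MvPolynomial (Fin d × (Fin dA × Fin dA) × Bool) ℂ :=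
  Fin.snoc (VPc d dA) (fun k => ∑ l, C ((starRingEnd ℂ) (Mk dA k l)) * VPc d dA i0 l)

/-- The Gram-determinant polynomial of the tuple `(v_1, …, v_d, M v_{i0})`. -/
def Pdet (d dA : ℕ) (i0 : Fin d) : MvPolynomial (Fin d × (Fin dA × Fin dA) × Bool) ℂ :=
  (Matrix.of fun i j => ∑ k, WPc d dA i0 i k * WP d dA i0 j k :
    Matrix (Fin (d + 1)) (Fin (d + 1)) _).det

variable {d dA : ℕ} (v : Fin d → (Fin dA × Fin dA) → ℂ)

lemma eval_VP (j : Fin d) (k : Fin dA × Fin dA) :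
    eval (fun x => ((realCoords v x : ℝ) : ℂ)) (VP d dA j k) = v j k := by
  simp only [VP, map_add, _root_.map_mul, eval_X, eval_C, realCoords, if_true, if_false,
    Bool.false_eq_true, ite_true, ite_false]
  rw [mul_comm, Complex.re_add_im]

lemma eval_VPc (j : Fin d) (k : Fin dA × Fin dA) :
    eval (fun x => ((realCoords v x : ℝ) : ℂ)) (VPc d dA j k) = (starRingEnd ℂ) (v j k) := by
  simp only [VPc, map_sub, _root_.map_mul, eval_X, eval_C, realCoords, if_true, if_false,
    Bool.false_eq_true, ite_true, ite_false]
  apply Complex.ext <;> simp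

lemma eval_WP (i0 : Fin d) (i : Fin (d + 1)) (k : Fin dA × Fin dA) :
    eval (fun x => ((realCoords v x : ℝ) : ℂ)) (WP d dA i0 i k) =
      (Fin.snoc v (Mk dA *ᵥ v i0) : Fin (d+1) → (Fin dA × Fin dA) → ℂ) i k := by
  induction i using Fin.lastCases with
  | last =>
    simp only [WP, Fin.snoc_last, map_sum, _root_.map_mul, eval_C, eval_VP]
    simp [Matrix.mulVec, dotProduct]
  | cast j =>
    simp only [WP, Fin.snoc_castSucc, eval_VP]

lemma eval_WPc (i0 : Fin d) (i : Fin (d + 1)) (k : Fin dA × Fin dA) :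
    eval (fun x => ((realCoords v x : ℝ) : ℂ)) (WPc d dA i0 i k) =
      (starRingEnd ℂ) ((Fin.snoc v (Mk dA *ᵥ v i0) : Fin (d+1) → (Fin dA × Fin dA) → ℂ) i k) := by
  induction i using Fin.lastCases with
  | last =>
    simp only [WPc, Fin.snoc_last, map_sum, _root_.map_mul, eval_C, eval_VPc]
    simp [Matrix.mulVec, dotProduct, map_sum, _root_.map_mul]
  | cast j =>
    simp only [WPc, Fin.snoc_castSucc, eval_VPc]

lemma eval_Pdet (i0 : Fin d) :
    eval (fun x => ((realCoords v x : ℝ) : ℂ)) (Pdet d dA i0) =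
      (Matrix.of fun i j => star ((Fin.snoc v (Mk dA *ᵥ v i0) : Fin (d+1) → (Fin dA × Fin dA) → ℂ) i) ⬝ᵥ
        (Fin.snoc v (Mk dA *ᵥ v i0) : Fin (d+1) → (Fin dA × Fin dA) → ℂ) j : Matrix (Fin (d + 1)) (Fin (d + 1)) ℂ).det := by
  rw [Pdet, RingHom.map_det]
  congr 1
  ext i j
  simp only [RingHom.mapMatrix_apply, Matrix.map_apply, of_apply, map_sum, _root_.map_mul,
    eval_WP, eval_WPc, dotProduct, Pi.star_apply]
  rfl

end OrthAux

/-- **The orthogonality constraint is a real algebraic condition (Lemma 5 of the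
paper).**  There is a family of real polynomials in the real coordinates of a
`d`-tuple of vectors in `ℂ^{dA} ⊗ ℂ^{dA}` whose common zeros, among linearly
independent tuples, are exactly the tuples whose span `S` satisfies
`S ⊥ ((I+X) ⊗ (I−X))·S^⊥`. -/
theorem orth_constraint_is_algebraic
    (dA d : ℕ) (hdA : 0 < dA) (hd : 0 < d) (hdim : d ≤ dA * dA) :
    ∃ Polys : Set (MvPolynomial (Fin d × (Fin dA × Fin dA) × Bool) ℝ),
      ∀ v : Fin d → (Fin dA × Fin dA) → ℂ, LinearIndependent ℂ v →
        ((∀ p ∈ Polys, MvPolynomial.eval (realCoords v) p = 0) ↔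
          OrthConstraint (Submodule.span ℂ (Set.range v))) := by
  classical
  refine ⟨{p | ∃ i : Fin d, p = OrthAux.reP (OrthAux.Pdet d dA i) ∨
      p = OrthAux.imP (OrthAux.Pdet d dA i)}, fun v hv => ?_⟩
  constructor
  · intro hp
    rw [OrthAux.orthConstraint_iff]
    intro i
    have hre := hp _ ⟨i, Or.inl rfl⟩
    have him := hp _ ⟨i, Or.inr rfl⟩
    rw [OrthAux.eval_reP] at hre
    rw [OrthAux.eval_imP] at him
    have hz : MvPolynomial.eval (fun x => ((realCoords v x : ℝ) : ℂ))
        (OrthAux.Pdet d dA i) = 0 := Complex.ext (by simpa using hre) (by simpa using him)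
    rw [OrthAux.eval_Pdet] at hz
    have hdep := (OrthAux.gram_det_eq_zero_iff _).mp hz
    rw [linearIndependent_fin_snoc] at hdep
    by_contra hmem
    exact hdep ⟨hv, hmem⟩
  · intro h p hp
    obtain ⟨i, hi⟩ := hp
    rw [OrthAux.orthConstraint_iff] at h
    have hdep : ¬ LinearIndependent ℂ (Fin.snoc v (OrthAux.Mk dA *ᵥ v i)) := by
      rw [linearIndependent_fin_snoc]
      rintro ⟨-, hx⟩
      exact hx (h i)
    have hz := (OrthAux.gram_det_eq_zero_iff _).mpr hdep
    rw [← OrthAux.eval_Pdet v i] at hz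
    rcases hi with rfl | rfl
    · rw [OrthAux.eval_reP, hz, Complex.zero_re]
    · rw [OrthAux.eval_imP, hz, Complex.zero_im]
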